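/- Let (X, μ) be a probability space, S a finite set, and for each s ∈ S a measure-preserving map T_s : X → X. Suppose Φ ≥ 0 is such that for every measurable B with 0 < μ(B) < 1, (1/(|S| μ(B)(1−μ(B)))) ∑_{s∈S} μ(B ∩ T_s⁻¹(Bᶜ)) ≥ Φ. Then for any nonnegative f ∈ L²(X,μ), 2 μ({f = 0}) · Φ · ∫ f dμ ≤ (1/|S|) ∑_{s∈S} ∫ |f − f∘T_s| dμ. -/

import Mathlib

open MeasureTheory
open scoped ENNReal

private lemma xor_indicator (a b t : ℝ) :
    (if (t < a) = (t < b) then (0:ℝ≥0∞) else 1)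
      = (Set.Ico (min a b) (max a b)).indicator (fun _ => (1:ℝ≥0∞)) t := by
  rcases le_or_gt a t with h1 | h1 <;> rcases le_or_gt b t with h2 | h2
  · simp [Set.indicator_apply, Set.mem_Ico, min_le_iff, lt_max_iff, eq_iff_iff,
      h1.not_gt, h2.not_gt]
  · simp [Set.indicator_apply, Set.mem_Ico, min_le_iff, lt_max_iff, eq_iff_iff,
      h1, h2, h1.not_gt]
  · simp [Set.indicator_apply, Set.mem_Ico, min_le_iff, lt_max_iff, eq_iff_iff,
      h1, h2, h2.not_gt]
  · simp [Set.indicator_apply, Set.mem_Ico, min_le_iff, lt_max_iff, eq_iff_iff,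
      h1, h2, h1.not_ge, h2.not_ge]

private lemma layer_abs {a b : ℝ} (ha : 0 ≤ a) (hb : 0 ≤ b) :
    ENNReal.ofReal |a - b|
      = ∫⁻ t in Set.Ioi (0:ℝ), (if (t < a) = (t < b) then (0:ℝ≥0∞) else 1) := by
  have h1 : (∫⁻ t in Set.Ioi (0:ℝ), (if (t < a) = (t < b) then (0:ℝ≥0∞) else 1))
      = ∫⁻ t in Set.Ioi (0:ℝ),
          (Set.Ico (min a b) (max a b)).indicator (fun _ => (1:ℝ≥0∞)) t := by
    exact lintegral_congr fun t => xor_indicator a b t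
  rw [h1, lintegral_indicator measurableSet_Ico, Measure.restrict_restrict measurableSet_Ico,
    setLIntegral_one]
  have habs : |a - b| = max a b - min a b := by rw [abs_sub_comm]; exact (max_sub_min_eq_abs a b).symm
  rw [habs]
  refine le_antisymm ?_ ?_
  · calc ENNReal.ofReal (max a b - min a b) = volume (Set.Ioo (min a b) (max a b)) := by
          rw [Real.volume_Ioo]
      _ ≤ volume (Set.Ico (min a b) (max a b) ∩ Set.Ioi 0) := by
          refine measure_mono fun t ht => ?_
          exact ⟨⟨le_of_lt ht.1, ht.2⟩, lt_of_le_of_lt (le_min ha hb) ht.1⟩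
  · calc volume (Set.Ico (min a b) (max a b) ∩ Set.Ioi 0)
        ≤ volume (Set.Ico (min a b) (max a b)) := measure_mono Set.inter_subset_left
      _ = ENNReal.ofReal (max a b - min a b) := Real.volume_Ico

private lemma measure_symmdiff_eq {X : Type*} [MeasurableSpace X] {μ : Measure X}
    [IsFiniteMeasure μ] {T : X → X} (hT : MeasurePreserving T μ μ)
    {B : Set X} (hB : MeasurableSet B) :
    μ ((B \ T ⁻¹' B) ∪ (T ⁻¹' B \ B)) = 2 * μ (B ∩ T ⁻¹' Bᶜ) := by
  have hTB : MeasurableSet (T ⁻¹' B) := hT.measurable hB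
  have h1 : B ∩ T ⁻¹' Bᶜ = B \ T ⁻¹' B := by
    rw [Set.preimage_compl, Set.diff_eq]
  have hpre : μ (T ⁻¹' B) = μ B := hT.measure_preimage hB.nullMeasurableSet
  have e1 := measure_diff_add_inter (μ := μ) (T ⁻¹' B) hB
  have e2 := measure_diff_add_inter (μ := μ) B hTB
  have hic : μ (T ⁻¹' B ∩ B) = μ (B ∩ T ⁻¹' B) := by rw [Set.inter_comm]
  have h2 : μ (T ⁻¹' B \ B) = μ (B \ T ⁻¹' B) := by
    have hfin : μ (B ∩ T ⁻¹' B) ≠ ⊤ := measure_ne_top μ _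
    have key : μ (T ⁻¹' B \ B) + μ (B ∩ T ⁻¹' B) = μ (B \ T ⁻¹' B) + μ (B ∩ T ⁻¹' B) := by
      rw [← hic, e1, hpre, ← e2, hic]
    exact WithTop.add_right_cancel hfin key
  rw [measure_union (disjoint_sdiff_sdiff) (hTB.diff hB), h1, h2, two_mul]


/-- Level-set (co-area) lemma: if `Φ` is a lower bound for the expansion
constant of a family of measure-preserving maps `(T_s)_{s ∈ S}`, then for every
nonnegative `f ∈ L²`,
`2 μ{f = 0} Φ ∫ f ≤ (1/|S|) ∑_s ∫ |f − f∘T_s|`. -/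
theorem level_set_expansion
    {X : Type*} [MeasurableSpace X] (μ : Measure X) [IsProbabilityMeasure μ]
    {ι : Type*} (S : Finset ι) (hS : S.Nonempty) (T : ι → X → X)
    (hT : ∀ s ∈ S, MeasurePreserving (T s) μ μ)
    (Φ : ℝ) (hΦ0 : 0 ≤ Φ)
    (hΦ : ∀ B : Set X, MeasurableSet B → 0 < μ B → μ B < 1 →
      Φ ≤ (1 / (S.card * (μ B).toReal * (1 - (μ B).toReal))) *
        ∑ s ∈ S, (μ (B ∩ T s ⁻¹' Bᶜ)).toReal)
    (f : X → ℝ) (hf : ∀ x, 0 ≤ f x) (hfm : MemLp f 2 μ) :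
    2 * (μ {x | f x = 0}).toReal * Φ * ∫ x, f x ∂μ ≤
      (1 / S.card) * ∑ s ∈ S, ∫ x, |f x - f (T s x)| ∂μ := by
  classical
  -- replace f by a measurable nonnegative representative g
  set g : X → ℝ := fun x => max (hfm.1.mk f x) 0 with hg_def
  have hgm : Measurable g := (hfm.1.stronglyMeasurable_mk.measurable).max measurable_const
  have hg0 : ∀ x, 0 ≤ g x := fun x => le_max_right _ _
  have hgf : g =ᵐ[μ] f := by
    filter_upwards [hfm.1.ae_eq_mk] with x hx
    simp [hg_def, ← hx, max_eq_left (hf x)]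
  have hn0 : (0:ℝ) < S.card := by exact_mod_cast Finset.card_pos.2 hS
  have hgint : Integrable g μ := (hfm.integrable one_le_two).congr hgf.symm
  have hI : ∫ x, f x ∂μ = ∫ x, g x ∂μ := integral_congr_ae hgf.symm
  have hμ0 : μ {x | f x = 0} = μ {x | g x = 0} := by
    apply measure_congr
    filter_upwards [hgf] with x hx
    show (f x = 0) = (g x = 0)
    rw [hx]
  have hAeq : ∀ s ∈ S, ∫ x, |f x - f (T s x)| ∂μ = ∫ x, |g x - g (T s x)| ∂μ := by
    intro s hs
    have hc : (fun x => g (T s x)) =ᵐ[μ] fun x => f (T s x) :=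
      (hT s hs).quasiMeasurePreserving.ae_eq_comp hgf
    apply integral_congr_ae
    filter_upwards [hgf, hc] with x h1 h2
    rw [← h1, ← h2]
  rw [hI, hμ0, Finset.sum_congr rfl hAeq]
  have hAr : ∀ s ∈ S, (0:ℝ) ≤ ∫ x, |g x - g (T s x)| ∂μ :=
    fun s _ => integral_nonneg fun x => abs_nonneg _
  set c := (μ {x | g x = 0}).toReal with hc_def
  set I := ∫ x, g x ∂μ with hI_def
  have hI0 : 0 ≤ I := integral_nonneg hg0
  rcases eq_or_lt_of_le (ENNReal.toReal_nonneg : (0:ℝ) ≤ c) with hc0 | hc0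
  · have h2 : 2 * c * Φ * I = 0 := by rw [hc_def, ← hc0]; ring
    rw [h2]
    exact mul_nonneg (div_nonneg zero_le_one (Nat.cast_nonneg _)) (Finset.sum_nonneg hAr)
  -- main case : c > 0
  have hZm : MeasurableSet {x | g x = 0} := hgm (measurableSet_singleton 0)
  have hμz : μ {x | g x = 0} ≠ 0 := by
    intro h0
    rw [h0] at hc0
    simp at hc0
  set B : ℝ → Set X := fun t => {x | t < g x} with hB_def
  have hBmeas : ∀ t, MeasurableSet (B t) := fun t => measurableSet_lt measurable_const hgm
  set E : ι → ℝ → Set X := fun s t => (B t \ T s ⁻¹' B t) ∪ (T s ⁻¹' B t \ B t) with hE_def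
  -- per-s key identity and measurability
  have key : ∀ s ∈ S,
      ENNReal.ofReal (∫ x, |g x - g (T s x)| ∂μ) = (∫⁻ t in Set.Ioi (0:ℝ), μ (E s t)) ∧
        Measurable (fun t => μ (E s t)) := by
    intro s hs
    have hTm : Measurable (T s) := (hT s hs).measurable
    have hint : Integrable (fun x => |g x - g (T s x)|) μ :=
      (hgint.sub (((hT s hs).integrable_comp hgm.aestronglyMeasurable).2 hgint)).abs
    have hH : Measurable (Function.uncurry fun (x : X) (t : ℝ) =>
        if (t < g x) = (t < g (T s x)) then (0:ℝ≥0∞) else 1) := by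
      have m1 : MeasurableSet {p : X × ℝ | p.2 < g p.1} :=
        measurableSet_lt measurable_snd (hgm.comp measurable_fst)
      have m2 : MeasurableSet {p : X × ℝ | p.2 < g (T s p.1)} :=
        measurableSet_lt measurable_snd (hgm.comp (hTm.comp measurable_fst))
      have hset : MeasurableSet {p : X × ℝ | (p.2 < g p.1) = (p.2 < g (T s p.1))} := by
        have he : {p : X × ℝ | (p.2 < g p.1) = (p.2 < g (T s p.1))} =
            ({p : X × ℝ | p.2 < g p.1} ∩ {p : X × ℝ | p.2 < g (T s p.1)}) ∪
            ({p : X × ℝ | p.2 < g p.1}ᶜ ∩ {p : X × ℝ | p.2 < g (T s p.1)}ᶜ) := by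
          ext p
          simp only [Set.mem_setOf_eq, Set.mem_union, Set.mem_inter_iff, Set.mem_compl_iff,
            eq_iff_iff]
          tauto
        rw [he]
        exact (m1.inter m2).union (m1.compl.inter m2.compl)
      exact Measurable.ite hset measurable_const measurable_const
    have hEm : ∀ t, MeasurableSet (E s t) :=
      fun t => ((hBmeas t).diff (hTm (hBmeas t))).union ((hTm (hBmeas t)).diff (hBmeas t))
    have hind : ∀ t, (fun x => if (t < g x) = (t < g (T s x)) then (0:ℝ≥0∞) else 1)
        = (E s t).indicator (fun _ => (1:ℝ≥0∞)) := by
      intro t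
      funext x
      have hmem : x ∈ E s t ↔ ¬ ((t < g x) ↔ (t < g (T s x))) := by
        simp only [hE_def, hB_def, Set.mem_union, Set.mem_diff, Set.mem_preimage,
          Set.mem_setOf_eq]
        tauto
      rw [Set.indicator_apply]
      by_cases h : (t < g x) ↔ (t < g (T s x))
      · rw [if_pos (eq_iff_iff.2 h), if_neg (fun hx => (hmem.1 hx) h)]
      · rw [if_neg (fun he => h (eq_iff_iff.1 he)), if_pos (hmem.2 h)]
    have hinner : ∀ t, (∫⁻ x, (if (t < g x) = (t < g (T s x)) then (0:ℝ≥0∞) else 1) ∂μ)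
        = μ (E s t) := by
      intro t
      rw [hind t]
      exact lintegral_indicator_one (hEm t)
    constructor
    · rw [ofReal_integral_eq_lintegral_ofReal hint
        (Filter.Eventually.of_forall fun x => abs_nonneg _)]
      rw [lintegral_congr fun x => layer_abs (hg0 x) (hg0 (T s x))]
      rw [lintegral_lintegral_swap hH.aemeasurable]
      exact lintegral_congr hinner
    · have := Measurable.lintegral_prod_left (μ := μ) hH
      convert this using 1
      funext t
      exact (hinner t).symm
  -- pointwise lower bound  on (0,∞)
  have hpt2 : ∀ t ∈ Set.Ioi (0:ℝ),
      ENNReal.ofReal (2 * S.card * Φ * c) * μ (B t) ≤ ∑ s ∈ S, μ (E s t) := by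
    intro t ht
    rcases eq_or_ne (μ (B t)) 0 with hb0 | hb0
    · simp [hb0]
    have hdisj : Disjoint (B t) {x | g x = 0} := by
      rw [Set.disjoint_left]
      intro x hx hx0
      rw [Set.mem_setOf_eq] at hx hx0
      rw [hx0] at hx
      exact absurd hx (not_lt.2 (le_of_lt ht))
    have hsum1 : μ (B t) + μ {x | g x = 0} ≤ 1 := by
      rw [← measure_union hdisj hZm]
      exact prob_le_one
    have hb1 : μ (B t) < 1 :=
      lt_of_lt_of_le (ENNReal.lt_add_right (measure_ne_top μ _) hμz) hsum1
    have hbpos : 0 < μ (B t) := pos_iff_ne_zero.2 hb0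
    have hΦB := hΦ (B t) (hBmeas t) hbpos hb1
    set bR := (μ (B t)).toReal with hbR_def
    have hbR0 : 0 < bR := ENNReal.toReal_pos hb0 (measure_ne_top μ _)
    have hbRc : bR + c ≤ 1 := by
      have h1 : bR + c = (μ (B t) + μ {x | g x = 0}).toReal := by
        rw [ENNReal.toReal_add (measure_ne_top μ _) (measure_ne_top μ _)]
      rw [h1]
      calc (μ (B t) + μ {x | g x = 0}).toReal ≤ (1:ℝ≥0∞).toReal :=
            ENNReal.toReal_mono ENNReal.one_ne_top hsum1
        _ = 1 := ENNReal.toReal_one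
    have hbRlt1 : bR < 1 := by linarith
    have hP : (0:ℝ) < S.card * bR * (1 - bR) := by
      apply mul_pos (mul_pos hn0 hbR0)
      linarith
    have hsumR : Φ * (S.card * bR * (1 - bR)) ≤ ∑ s ∈ S, (μ (B t ∩ T s ⁻¹' (B t)ᶜ)).toReal := by
      rw [one_div, inv_mul_eq_div] at hΦB
      calc Φ * (S.card * bR * (1 - bR))
          ≤ ((∑ s ∈ S, (μ (B t ∩ T s ⁻¹' (B t)ᶜ)).toReal) / (S.card * bR * (1 - bR)))
              * (S.card * bR * (1 - bR)) :=
            mul_le_mul_of_nonneg_right hΦB (le_of_lt hP)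
        _ = ∑ s ∈ S, (μ (B t ∩ T s ⁻¹' (B t)ᶜ)).toReal := div_mul_cancel₀ _ (ne_of_gt hP)
    have hstep : (2 * S.card * Φ * c) * bR
        ≤ ∑ s ∈ S, 2 * (μ (B t ∩ T s ⁻¹' (B t)ᶜ)).toReal := by
      rw [← Finset.mul_sum]
      have h1c : c ≤ 1 - bR := by linarith
      nlinarith [mul_le_mul_of_nonneg_left h1c
        (by positivity : (0:ℝ) ≤ Φ * (S.card * bR)), hsumR]
    have hEeq : ∀ s ∈ S, μ (E s t) = 2 * μ (B t ∩ T s ⁻¹' (B t)ᶜ) :=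
      fun s hs => measure_symmdiff_eq (hT s hs) (hBmeas t)
    calc ENNReal.ofReal (2 * S.card * Φ * c) * μ (B t)
        = ENNReal.ofReal ((2 * S.card * Φ * c) * bR) := by
          rw [← ENNReal.ofReal_toReal (measure_ne_top μ (B t)),
            ← ENNReal.ofReal_mul (by positivity)]
      _ ≤ ENNReal.ofReal (∑ s ∈ S, 2 * (μ (B t ∩ T s ⁻¹' (B t)ᶜ)).toReal) :=
          ENNReal.ofReal_le_ofReal hstep
      _ = ∑ s ∈ S, ENNReal.ofReal (2 * (μ (B t ∩ T s ⁻¹' (B t)ᶜ)).toReal) :=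
          ENNReal.ofReal_sum_of_nonneg fun s _ => by positivity
      _ = ∑ s ∈ S, μ (E s t) := by
          refine Finset.sum_congr rfl fun s hs => ?_
          rw [hEeq s hs, ENNReal.ofReal_mul (by norm_num),
            ENNReal.ofReal_toReal (measure_ne_top μ _)]
          norm_num
  -- layer cake for the integral of g
  have hlayer : ENNReal.ofReal I = ∫⁻ t in Set.Ioi (0:ℝ), μ (B t) := by
    rw [hI_def, ofReal_integral_eq_lintegral_ofReal hgint (Filter.Eventually.of_forall hg0)]
    exact lintegral_eq_lintegral_meas_lt μ (Filter.Eventually.of_forall hg0) hgm.aemeasurable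
  -- assemble
  have main : ENNReal.ofReal (2 * S.card * Φ * c * I)
      ≤ ENNReal.ofReal (∑ s ∈ S, ∫ x, |g x - g (T s x)| ∂μ) := by
    calc ENNReal.ofReal (2 * S.card * Φ * c * I)
        = ENNReal.ofReal (2 * S.card * Φ * c) * ENNReal.ofReal I :=
          ENNReal.ofReal_mul (by positivity)
      _ = ENNReal.ofReal (2 * S.card * Φ * c) * ∫⁻ t in Set.Ioi (0:ℝ), μ (B t) := by
          rw [hlayer]
      _ = ∫⁻ t in Set.Ioi (0:ℝ), ENNReal.ofReal (2 * S.card * Φ * c) * μ (B t) :=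
          (lintegral_const_mul' _ _ ENNReal.ofReal_ne_top).symm
      _ ≤ ∫⁻ t in Set.Ioi (0:ℝ), ∑ s ∈ S, μ (E s t) := by
          refine lintegral_mono_ae ?_
          filter_upwards [ae_restrict_mem measurableSet_Ioi] with t ht
          exact hpt2 t ht
      _ = ∑ s ∈ S, ∫⁻ t in Set.Ioi (0:ℝ), μ (E s t) :=
          lintegral_finset_sum' S fun s hs => ((key s hs).2).aemeasurable
      _ = ∑ s ∈ S, ENNReal.ofReal (∫ x, |g x - g (T s x)| ∂μ) :=
          Finset.sum_congr rfl fun s hs => ((key s hs).1).symm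
      _ = ENNReal.ofReal (∑ s ∈ S, ∫ x, |g x - g (T s x)| ∂μ) :=
          (ENNReal.ofReal_sum_of_nonneg hAr).symm
  have hfinal : 2 * S.card * Φ * c * I ≤ ∑ s ∈ S, ∫ x, |g x - g (T s x)| ∂μ :=
    (ENNReal.ofReal_le_ofReal_iff (Finset.sum_nonneg hAr)).1 main
  calc 2 * c * Φ * I = (1 / S.card) * (2 * S.card * Φ * c * I) := by
        field_simp
    _ ≤ (1 / S.card) * ∑ s ∈ S, ∫ x, |g x - g (T s x)| ∂μ :=
        mul_le_mul_of_nonneg_left hfinal (by positivity)
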